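/- For all x, y, z > 0, the 3×3 symmetric matrix R with diagonal entries R₁₁ = 3(y+z+1)², R₂₂ = 3(x+z+1)², R₃₃ = 3(x+y+1)², and off-diagonal entries R₁₂ = R₂₁ = 3z²+3z−1, R₁₃ = R₃₁ = 3y²+3y−1, R₂₃ = R₃₂ = 3x²+3x−1, is strictly diagonally dominant with positive diagonal, hence positive definite. -/

import Mathlib

lemma abs_aux (t : ℝ) (ht : 0 < t) : |3*t^2+3*t-1| ≤ 3*t^2+3*t+1 := by
  rw [abs_le]; constructor <;> nlinarith

theorem stmt_2 (x y z : ℝ) (hx : 0 < x) (hy : 0 < y) (hz : 0 < z) :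
    let R : Matrix (Fin 3) (Fin 3) ℝ :=
      !![3*(y+z+1)^2, 3*z^2+3*z-1, 3*y^2+3*y-1;
         3*z^2+3*z-1, 3*(x+z+1)^2, 3*x^2+3*x-1;
         3*y^2+3*y-1, 3*x^2+3*x-1, 3*(x+y+1)^2]
    (∀ i, 0 < R i i ∧ ∑ j ∈ Finset.univ.erase i, |R i j| < |R i i|) ∧ R.PosDef := by
  intro R
  have hax := abs_aux x hx
  have hay := abs_aux y hy
  have haz := abs_aux z hz
  have hdx : |3*(x+y+1)^2| = 3*(x+y+1)^2 := abs_of_pos (by positivity)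
  have hdy : |3*(x+z+1)^2| = 3*(x+z+1)^2 := abs_of_pos (by positivity)
  have hdz : |3*(y+z+1)^2| = 3*(y+z+1)^2 := abs_of_pos (by positivity)
  constructor
  · intro i
    fin_cases i <;>
        simp [R, Fin.sum_univ_succ, Matrix.cons_val_zero, Matrix.cons_val_one] <;>
        refine ⟨by positivity, ?_⟩ <;>
      nlinarith [mul_pos hy hz, mul_pos hx hz, mul_pos hx hy]
  · rw [Matrix.posDef_iff_dotProduct_mulVec]; constructor
    · show R.conjTranspose = R
      ext i j
      fin_cases i <;> fin_cases j <;> simp [R]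
    · intro v hv
      obtain ⟨i, hi⟩ := Function.ne_iff.mp hv
      simp only [R, Matrix.mulVec, dotProduct, Fin.sum_univ_succ, Fin.sum_univ_zero,
        Matrix.cons_val_zero, Matrix.cons_val_one, Matrix.head_cons, Matrix.head_fin_const,
        Matrix.cons_val', Matrix.empty_val', Matrix.cons_val_fin_one, RCLike.re_to_real]
      simp [R, Matrix.mulVec, dotProduct, Fin.sum_univ_succ]
      have h01p : (0:ℝ) ≤ (6*z^2+6*z) * (v 0 + v 1)^2 := by positivity
      have h01n : (0:ℝ) ≤ 2 * (v 0 - v 1)^2 := by positivity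
      have h02p : (0:ℝ) ≤ (6*y^2+6*y) * (v 0 + v 2)^2 := by positivity
      have h02n : (0:ℝ) ≤ 2 * (v 0 - v 2)^2 := by positivity
      have h12p : (0:ℝ) ≤ (6*x^2+6*x) * (v 1 + v 2)^2 := by positivity
      have h12n : (0:ℝ) ≤ 2 * (v 1 - v 2)^2 := by positivity
      have key : (6*y*z+3*y+3*z+1) * v 0 ^ 2 + (6*x*z+3*x+3*z+1) * v 1 ^ 2
            + (6*x*y+3*x+3*y+1) * v 2 ^ 2 ≤
          v 0 * (3 * (y + z + 1) ^ 2 * v 0 + ((3 * z ^ 2 + 3 * z - 1) * v 1 + (3 * y ^ 2 + 3 * y - 1) * v 2)) +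
            (v 1 * ((3 * z ^ 2 + 3 * z - 1) * v 0 + (3 * (x + z + 1) ^ 2 * v 1 + (3 * x ^ 2 + 3 * x - 1) * v 2)) +
              v 2 * ((3 * y ^ 2 + 3 * y - 1) * v 0 + ((3 * x ^ 2 + 3 * x - 1) * v 1 + 3 * (x + y + 1) ^ 2 * v 2))) := by
        nlinarith [h01p, h01n, h02p, h02n, h12p, h12n]
      have g0 : (0:ℝ) ≤ (6*y*z+3*y+3*z+1) * v 0 ^ 2 := by positivity
      have g1 : (0:ℝ) ≤ (6*x*z+3*x+3*z+1) * v 1 ^ 2 := by positivity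
      have g2 : (0:ℝ) ≤ (6*x*y+3*x+3*y+1) * v 2 ^ 2 := by positivity
      fin_cases i <;> simp only [Fin.isValue, Fin.zero_eta, Fin.mk_one, Fin.reduceFinMk,
        Pi.zero_apply] at hi
      · have hp : 0 < (6*y*z+3*y+3*z+1) * v 0 ^ 2 := by
          have : 0 < v 0 ^ 2 := by positivity
          have : 0 < 6*y*z+3*y+3*z+1 := by positivity
          positivity
        linarith
      · have hp : 0 < (6*x*z+3*x+3*z+1) * v 1 ^ 2 := by
          have : 0 < v 1 ^ 2 := by positivity
          positivity
        linarith
      · have hp : 0 < (6*x*y+3*x+3*y+1) * v 2 ^ 2 := by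
          have : 0 < v 2 ^ 2 := by positivity
          positivity
        linarith
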